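/- Let M be a ℤ-lattice in V with dual lattice M^∨ and discriminant d = [M^∨ : M]. Let N ⊆ M be a primitive ℤ-submodule such that the restriction of b to the ℚ-span of N is nondegenerate. Then the indices [N^∨ : N] and [(N^⊥)^∨ : N^⊥] are finite and [N^∨ : N] ≤ d · [(N^⊥)^∨ : N^⊥]. -/

import Mathlib

open Submodule

section Aux

variable {V : Type*} [AddCommGroup V] [Module ℚ V]

private lemma int_smul_cast (k : ℤ) (v : V) : (k : ℚ) • v = k • v :=
  Int.cast_smul_eq_zsmul ℚ k v

private lemma nzsd_int : NoZeroSMulDivisors ℤ V := by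
  constructor
  intro k v h
  by_cases hk : k = 0
  · exact Or.inl hk
  · refine Or.inr ?_
    have h2 : (k : ℚ) • v = 0 := by rw [int_smul_cast]; exact h
    rcases smul_eq_zero.mp h2 with h' | h'
    · exact absurd (by exact_mod_cast h') hk
    · exact h'

private lemma exists_int_smul_mem (B : Submodule ℤ V) {x : V}
    (hx : x ∈ span ℚ (B : Set V)) : ∃ k : ℤ, k ≠ 0 ∧ k • x ∈ B := by
  induction hx using Submodule.span_induction with
  | mem y hy => exact ⟨1, one_ne_zero, by simpa using hy⟩
  | zero => exact ⟨1, one_ne_zero, by simp⟩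
  | add y z _ _ hy hz =>
      obtain ⟨k, hk, hky⟩ := hy; obtain ⟨l, hl, hlz⟩ := hz
      refine ⟨k * l, mul_ne_zero hk hl, ?_⟩
      rw [smul_add]
      exact add_mem (by rw [mul_comm, mul_smul]; exact B.smul_mem l hky)
        (by rw [mul_smul]; exact B.smul_mem k hlz)
  | smul q y _ hy =>
      obtain ⟨k, hk, hky⟩ := hy
      have hden : (q.den : ℚ) * q = (q.num : ℚ) := by
        have h0 : (q.den : ℚ) ≠ 0 := by exact_mod_cast q.den_nz
        rw [mul_comm, ← eq_div_iff h0]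
        exact (Rat.num_div_den q).symm
      refine ⟨(q.den : ℤ) * k, mul_ne_zero (by exact_mod_cast q.den_nz) hk, ?_⟩
      have : ((q.den : ℤ) * k) • (q • y) = q.num • (k • y) := by
        rw [← int_smul_cast ((q.den : ℤ) * k), ← int_smul_cast q.num, ← int_smul_cast k,
          smul_smul, smul_smul]
        congr 1
        push_cast
        rw [mul_comm (q.den : ℚ) (k : ℚ), mul_assoc, hden, mul_comm]
      rw [this]
      exact B.smul_mem _ hky

private lemma exists_int_linearMap {P : Type*} [AddCommGroup P] [Module ℤ P]
    (f : P →ₗ[ℤ] ℚ) (hf : ∀ x, ∃ k : ℤ, f x = (k : ℚ)) :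
    ∃ F : P →ₗ[ℤ] ℤ, ∀ x, ((F x : ℤ) : ℚ) = f x := by
  have key : ∀ x, (((f x).num : ℤ) : ℚ) = f x := by
    intro x; obtain ⟨k, hk⟩ := hf x; rw [hk]; norm_num
  refine ⟨⟨⟨fun x => (f x).num, ?_⟩, ?_⟩, key⟩
  · intro x y
    apply (Int.cast_injective (α := ℚ))
    push_cast
    rw [key, key, key, map_add]
  · intro c x
    apply (Int.cast_injective (α := ℚ))
    simp only [RingHom.id_apply, smul_eq_mul]
    push_cast
    rw [key, key, f.map_smul c x]
    norm_num

private lemma exists_linear_dual (b : LinearMap.BilinForm ℚ V)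
    (A C : Submodule ℤ V)
    (h : ∀ v ∈ A, ∀ c ∈ C, ∃ k : ℤ, b v c = (k : ℚ)) :
    ∃ R : A →ₗ[ℤ] (C →ₗ[ℤ] ℤ), ∀ (v : A) (c : C), ((R v c : ℤ) : ℚ) = b (v : V) (c : V) := by
  have step : ∀ v : A, ∃ F : C →ₗ[ℤ] ℤ, ∀ c : C, ((F c : ℤ) : ℚ) = b (v : V) (c : V) := by
    intro v
    obtain ⟨F, hF⟩ := exists_int_linearMap (((b (v : V)).restrictScalars ℤ).comp C.subtype)
      (fun c => h v v.2 c c.2)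
    exact ⟨F, fun c => hF c⟩
  choose F hF using step
  refine ⟨AddMonoidHom.toIntLinearMap
    { toFun := F, map_zero' := ?_, map_add' := ?_ }, hF⟩
  · ext c
    apply (Int.cast_injective (α := ℚ))
    rw [LinearMap.zero_apply, hF]
    simp
  · intro u v; ext c
    apply (Int.cast_injective (α := ℚ))
    rw [LinearMap.add_apply, Int.cast_add, hF, hF, hF, Submodule.coe_add, map_add,
      LinearMap.add_apply]

private lemma finite_quot (A B : Submodule ℤ V) (hAfg : A.FG)
    (hAB : (A : Set V) ⊆ (span ℚ (B : Set V) : Set V)) :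
    Finite (A ⧸ B.comap A.subtype) := by
  haveI : Module.Finite ℤ A := Module.Finite.iff_fg.mpr hAfg
  haveI : Module.Finite ℤ (A ⧸ B.comap A.subtype) :=
    Module.Finite.of_surjective _ (Submodule.mkQ_surjective _)
  apply Module.finite_of_fg_torsion
  intro x
  obtain ⟨a, rfl⟩ := Submodule.mkQ_surjective _ x
  obtain ⟨k, hk, hka⟩ := exists_int_smul_mem B (hAB a.2)
  refine ⟨⟨k, mem_nonZeroDivisors_of_ne_zero hk⟩, ?_⟩
  show (k : ℤ) • ((B.comap A.subtype).mkQ a) = 0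
  rw [← map_smul, Submodule.mkQ_apply, Submodule.Quotient.mk_eq_zero]
  simpa using hka

private lemma card_quotient_mul {R M : Type*} [Ring R] [AddCommGroup M] [Module R M]
    (J T : Submodule R M) (h : J ≤ T) :
    Nat.card (M ⧸ J) = Nat.card (M ⧸ T) * Nat.card (T ⧸ J.comap T.subtype) := by
  have h1 : Nat.card (M ⧸ J) = J.toAddSubgroup.index := Nat.card_congr (Equiv.refl _)
  have h2 : Nat.card (M ⧸ T) = T.toAddSubgroup.index := Nat.card_congr (Equiv.refl _)
  have h3 : Nat.card (T ⧸ J.comap T.subtype) =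
      J.toAddSubgroup.relIndex T.toAddSubgroup := by
    exact Nat.card_congr (Equiv.refl _)
  rw [h1, h2, h3, mul_comm]
  exact (AddSubgroup.relIndex_mul_index (show J.toAddSubgroup ≤ T.toAddSubgroup from h)).symm

end Aux

section Coker

variable {V : Type*} [AddCommGroup V] [Module ℚ V] [FiniteDimensional ℚ V]

private lemma finite_coker
    (b : LinearMap.BilinForm ℚ V) (hsymm : ∀ x y : V, b x y = b y x)
    (L : Submodule ℤ V) (hLfg : L.FG)
    (hLnd : ∀ v ∈ span ℚ (L : Set V), (∀ w ∈ span ℚ (L : Set V), b v w = 0) → v = 0)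
    (χ : L →ₗ[ℤ] (L →ₗ[ℤ] ℤ)) (hχ : ∀ n x : L, ((χ n x : ℤ) : ℚ) = b (x : V) (n : V)) :
    Finite ((L →ₗ[ℤ] ℤ) ⧸ LinearMap.range χ) := by
  haveI : NoZeroSMulDivisors ℤ V := nzsd_int
  haveI : Module.Finite ℤ L := Module.Finite.iff_fg.mpr hLfg
  haveI : Module.Free ℤ L := Module.free_of_finite_type_torsion_free'
  haveI : Module.Finite ℤ (L →ₗ[ℤ] ℤ) := inferInstance
  haveI : Module.Finite ℤ ((L →ₗ[ℤ] ℤ) ⧸ LinearMap.range χ) :=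
    Module.Finite.of_surjective _ (Submodule.mkQ_surjective _)
  apply Module.finite_of_fg_torsion
  set W : Submodule ℚ V := span ℚ (L : Set V) with hW
  have ndW : (b.restrict W).Nondegenerate := by
    refine (LinearMap.IsRefl.nondegenerate_iff_separatingLeft (B := b.restrict W)
      (fun x y h => (show b (y : V) (x : V) = 0 by rw [hsymm]; exact h))).mpr ?_
    intro v hv
    refine Subtype.ext (hLnd v.1 v.2 ?_)
    intro w hw
    simpa using hv ⟨w, hw⟩
  set bL := Module.Free.chooseBasis ℤ L with hbL
  have hliZ : LinearIndependent ℤ (fun i => ((bL i : V))) :=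
    bL.linearIndependent.map' L.subtype (Submodule.ker_subtype L)
  have hliQ : LinearIndependent ℚ (fun i => ((bL i : V))) :=
    (LinearIndependent.iff_fractionRing ℤ ℚ).mp hliZ
  have h2' : (span ℤ (Set.range fun i => ((bL i : V)))) = L := by
    rw [show (Set.range fun i => ((bL i : V))) = L.subtype '' Set.range bL from by
      rw [← Set.range_comp]; rfl, ← Submodule.map_span, bL.span_eq, Submodule.map_subtype_top]
  have hsp : span ℚ (Set.range fun i => ((bL i : V))) = W := by
    rw [hW]
    conv_lhs => rw [← Submodule.span_span_of_tower (R := ℤ) (S := ℚ)]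
    rw [h2']
  have hmem : ∀ i, ((bL i : V)) ∈ W := fun i => subset_span (bL i).2
  set wι : _ → W := fun i => (⟨bL i, hmem i⟩ : W) with hwι
  have hliW : LinearIndependent ℚ wι := by
    apply LinearIndependent.of_comp W.subtype
    exact hliQ
  have hsp2 : span ℚ (Set.range wι) = ⊤ := by
    apply Submodule.map_injective_of_injective (Submodule.injective_subtype W)
    rw [Submodule.map_span, Submodule.map_subtype_top, ← Set.range_comp]
    exact hsp
  set BW : Module.Basis _ ℚ W := Module.Basis.mk hliW hsp2.ge with hBW
  -- torsion
  intro fq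
  obtain ⟨f, rfl⟩ := Submodule.mkQ_surjective _ fq
  set fW : W →ₗ[ℚ] ℚ := BW.constr ℚ (fun i => ((f (bL i) : ℤ) : ℚ)) with hfW
  set v0 : W := ((b.restrict W).toDual ndW).symm fW with hv0def
  have hv0 : ∀ y : W, b (v0 : V) (y : V) = fW y := by
    intro y
    have := LinearMap.BilinForm.apply_toDual_symm_apply (B := b.restrict W) (hB := ndW) fW y
    simpa using this
  have hagree : ∀ x : L, b (v0 : V) (x : V) = ((f x : ℤ) : ℚ) := by
    have heq : (((b (v0 : V)).restrictScalars ℤ).comp L.subtype) =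
        ((Algebra.linearMap ℤ ℚ).comp f) := by
      apply bL.ext; intro i
      simp only [LinearMap.coe_comp, Function.comp_apply, LinearMap.coe_restrictScalars,
        Submodule.coe_subtype, Algebra.linearMap_apply]
      have h3 : b (v0 : V) ((bL i : V)) = fW (wι i) := hv0 (wι i)
      rw [h3]
      show fW (wι i) = _
      have h4 : wι i = BW i := by rw [hBW, Module.Basis.mk_apply]
      rw [h4, hfW, Module.Basis.constr_basis]
      simp
    intro x
    exact LinearMap.congr_fun heq x
  have hv0W : (v0 : V) ∈ span ℚ (L : Set V) := v0.2
  obtain ⟨k, hk, hkL⟩ := exists_int_smul_mem L hv0W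
  set n : L := ⟨k • (v0 : V), hkL⟩ with hn
  have hχn : χ n = k • f := by
    ext x
    apply Int.cast_injective (α := ℚ)
    rw [hχ]
    have h5 : b (x : V) ((n : V)) = (k : ℚ) * b (x : V) (v0 : V) := by
      have : ((n : V)) = (k : ℚ) • (v0 : V) := by rw [hn, int_smul_cast]
      rw [this, map_smul, smul_eq_mul]
    rw [h5, hsymm (x : V) (v0 : V), hagree x]
    simp only [LinearMap.smul_apply, smul_eq_mul]
    push_cast
    ring
  refine ⟨⟨k, mem_nonZeroDivisors_of_ne_zero hk⟩, ?_⟩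
  show (k : ℤ) • ((LinearMap.range χ).mkQ f) = 0
  rw [← map_smul, Submodule.mkQ_apply, Submodule.Quotient.mk_eq_zero, ← hχn]
  exact LinearMap.mem_range_self χ n

end Coker

set_option maxHeartbeats 2000000 in
/-- Let `V` be a finite-dimensional `ℚ`-vector space with a nondegenerate
symmetric bilinear form `b`, `M` a `ℤ`-lattice in `V` with dual lattice `Mdual` and
discriminant `d = [M^∨ : M]`.  Let `N ⊆ M` be a primitive `ℤ`-submodule such that the
restriction of `b` to the `ℚ`-span of `N` is nondegenerate.  Then the indices
`[N^∨ : N]` and `[(N^⊥)^∨ : N^⊥]` are finite and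
`[N^∨ : N] ≤ d * [(N^⊥)^∨ : N^⊥]`. -/
theorem stmt0
    {V : Type*} [AddCommGroup V] [Module ℚ V] [FiniteDimensional ℚ V]
    (b : LinearMap.BilinForm ℚ V)
    (hsymm : ∀ x y : V, b x y = b y x)
    (hnd : ∀ v : V, (∀ w : V, b v w = 0) → v = 0)
    -- M is a ℤ-lattice in V
    (M : Submodule ℤ V) (hMfg : M.FG)
    (hMspan : Submodule.span ℚ (M : Set V) = ⊤)
    (hMint : ∀ x ∈ M, ∀ y ∈ M, ∃ k : ℤ, b x y = (k : ℚ))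
    -- the dual lattice M^∨
    (Mdual : Submodule ℤ V)
    (hMdual : ∀ x : V, x ∈ Mdual ↔ ∀ m ∈ M, ∃ k : ℤ, b x m = (k : ℚ))
    -- N ⊆ M primitive, with nondegenerate restriction of b to its ℚ-span
    (N : Submodule ℤ V) (hNM : N ≤ M)
    (hprim : ∀ m ∈ M, ∀ k : ℤ, k ≠ 0 → k • m ∈ N → m ∈ N)
    (hNnd : ∀ v ∈ Submodule.span ℚ (N : Set V),
      (∀ w ∈ Submodule.span ℚ (N : Set V), b v w = 0) → v = 0)
    -- N^⊥, the orthogonal complement of N inside M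
    (Nperp : Submodule ℤ V)
    (hNperpdef : ∀ x : V, x ∈ Nperp ↔ x ∈ M ∧ ∀ n ∈ N, b x n = 0)
    -- the natural map N → N^∨ = Hom_ℤ(N, ℤ), n ↦ (x ↦ b(x,n))
    (φ : N →ₗ[ℤ] (N →ₗ[ℤ] ℤ))
    (hφ : ∀ n x : N, ((φ n x : ℤ) : ℚ) = b (x : V) (n : V))
    -- the natural map N^⊥ → (N^⊥)^∨ = Hom_ℤ(N^⊥, ℤ)
    (ψ : Nperp →ₗ[ℤ] (Nperp →ₗ[ℤ] ℤ))
    (hψ : ∀ n x : Nperp, ((ψ n x : ℤ) : ℚ) = b (x : V) (n : V)) :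
    Finite ((N →ₗ[ℤ] ℤ) ⧸ LinearMap.range φ) ∧
    Finite ((Nperp →ₗ[ℤ] ℤ) ⧸ LinearMap.range ψ) ∧
    Nat.card ((N →ₗ[ℤ] ℤ) ⧸ LinearMap.range φ) ≤
      Nat.card (Mdual ⧸ (M.comap Mdual.subtype)) *
        Nat.card ((Nperp →ₗ[ℤ] ℤ) ⧸ LinearMap.range ψ) := by
  classical
  haveI : NoZeroSMulDivisors ℤ V := nzsd_int
  -- spanning helper
  have hker_span : ∀ (v : V) (S : Submodule ℤ V), (∀ x ∈ S, b v x = 0) →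
      ∀ w ∈ span ℚ (S : Set V), b v w = 0 := by
    intro v S h w hw
    have hle : span ℚ (S : Set V) ≤ LinearMap.ker (b v) :=
      span_le.mpr (fun x hx => h x hx)
    exact hle hw
  have hMMdual : M ≤ Mdual := fun x hx => (hMdual x).mpr (fun m hm => hMint x hx m hm)
  have hNperpM : Nperp ≤ M := fun x hx => ((hNperpdef x).mp hx).1
  set W : Submodule ℚ V := span ℚ (N : Set V) with hW
  set Wp : Submodule ℚ V := LinearMap.BilinForm.orthogonal b W with hWp
  have hrefl : LinearMap.IsRefl b := fun x y h => by rw [hsymm]; exact h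
  have ndW : (b.restrict W).Nondegenerate := by
    refine (LinearMap.IsRefl.nondegenerate_iff_separatingLeft (B := b.restrict W)
      (fun x y h => (show b (y : V) (x : V) = 0 by rw [hsymm]; exact h))).mpr ?_
    intro v hv
    exact Subtype.ext (hNnd v.1 v.2 (fun w hw => by simpa using hv ⟨w, hw⟩))
  have hcompl : IsCompl W Wp :=
    LinearMap.BilinForm.isCompl_orthogonal_of_restrict_nondegenerate hrefl ndW
  have hmemWp : ∀ x : V, x ∈ Wp ↔ ∀ n ∈ N, b x n = 0 := by
    intro x
    constructor
    · intro hx n hn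
      rw [hsymm]
      exact hx n (subset_span hn)
    · intro h
      intro y hy
      show b y x = 0
      rw [hsymm]
      exact hker_span x N h y hy
  have hNperpWp : (Nperp : Set V) ⊆ (Wp : Set V) :=
    fun x hx => (hmemWp x).mpr (fun n hn => ((hNperpdef x).mp hx).2 n hn)
  have hMW_N : ∀ x ∈ M, x ∈ W → x ∈ N := by
    intro x hxM hxW
    obtain ⟨k, hk, hkN⟩ := exists_int_smul_mem N hxW
    exact hprim x hxM k hk hkN
  have hMWp_Nperp : ∀ x ∈ M, x ∈ Wp → x ∈ Nperp :=
    fun x hxM hxWp => (hNperpdef x).mpr ⟨hxM, (hmemWp x).mp hxWp⟩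
  have hspanNperp : span ℚ (Nperp : Set V) = Wp := by
    apply le_antisymm
    · rw [span_le]; exact hNperpWp
    · intro x hx
      have hxV : x ∈ span ℚ (M : Set V) := by rw [hMspan]; trivial
      obtain ⟨k, hk, hkM⟩ := exists_int_smul_mem M hxV
      have hkWp : k • x ∈ Wp := by
        rw [← int_smul_cast]
        exact Wp.smul_mem _ hx
      have hkNperp : k • x ∈ Nperp := hMWp_Nperp _ hkM hkWp
      have hx2 : x = ((k : ℚ))⁻¹ • ((k : ℚ) • x) := by
        rw [smul_smul, inv_mul_cancel₀ (by exact_mod_cast hk), one_smul]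
      rw [hx2]
      apply Submodule.smul_mem
      rw [int_smul_cast]
      exact subset_span hkNperp
  have hndWp : ∀ v ∈ Wp, (∀ w ∈ Wp, b v w = 0) → v = 0 := by
    intro v hv hvperp
    apply hnd
    intro w
    have hw : w ∈ W ⊔ Wp := by rw [hcompl.sup_eq_top]; trivial
    obtain ⟨w1, hw1, w2, hw2, rfl⟩ := mem_sup.mp hw
    rw [map_add, hvperp w2 hw2, add_zero, hsymm]
    exact hv w1 hw1
  have hndNperp : ∀ v ∈ span ℚ (Nperp : Set V),
      (∀ w ∈ span ℚ (Nperp : Set V), b v w = 0) → v = 0 := by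
    rw [hspanNperp]
    exact hndWp
  -- finite generation
  haveI : Module.Finite ℤ M := Module.Finite.iff_fg.mpr hMfg
  haveI : Module.Free ℤ M := Module.free_of_finite_type_torsion_free'
  haveI : IsNoetherian ℤ M := isNoetherian_of_fg_of_noetherian M hMfg
  have hsubfg : ∀ S : Submodule ℤ V, S ≤ M → S.FG := by
    intro S hSM
    have h1 : (S.comap M.subtype).FG := IsNoetherian.noetherian _
    have h2 : Submodule.map M.subtype (S.comap M.subtype) = S := by
      rw [Submodule.map_comap_subtype]
      exact inf_eq_right.mpr hSM
    rw [← h2]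
    exact h1.map _
  have hNfg : N.FG := hsubfg N hNM
  have hNperpfg : Nperp.FG := hsubfg Nperp hNperpM
  have fin1 : Finite ((N →ₗ[ℤ] ℤ) ⧸ LinearMap.range φ) :=
    finite_coker b hsymm N hNfg hNnd φ hφ
  have fin2 : Finite ((Nperp →ₗ[ℤ] ℤ) ⧸ LinearMap.range ψ) :=
    finite_coker b hsymm Nperp hNperpfg hndNperp ψ hψ
  -- dual lattice is f.g. and has finite quotient by M
  obtain ⟨rM, hrM⟩ := exists_linear_dual b Mdual M (fun v hv c hc => (hMdual v).mp hv c hc)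
  have hrMinj : Function.Injective rM := by
    intro u v huv
    have hz : ((u : V) - (v : V)) = 0 := by
      apply hnd
      intro w
      have hw : w ∈ span ℚ (M : Set V) := by rw [hMspan]; trivial
      refine hker_span _ M ?_ w hw
      intro m hm
      have h1 := hrM u ⟨m, hm⟩
      have h2 := hrM v ⟨m, hm⟩
      rw [map_sub, LinearMap.sub_apply, ← h1, ← h2, huv]
      ring
    exact Subtype.ext (sub_eq_zero.mp hz)
  haveI : Module.Finite ℤ (M →ₗ[ℤ] ℤ) := inferInstance
  haveI : IsNoetherian ℤ (M →ₗ[ℤ] ℤ) := inferInstance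
  haveI : IsNoetherian ℤ Mdual := isNoetherian_of_injective rM hrMinj
  haveI : Module.Finite ℤ Mdual := ⟨IsNoetherian.noetherian ⊤⟩
  have hMdualfg : Mdual.FG := Module.Finite.iff_fg.mp inferInstance
  have find : Finite (Mdual ⧸ M.comap Mdual.subtype) :=
    finite_quot Mdual M hMdualfg (fun x _ => by rw [hMspan]; trivial)
  -- restriction maps
  obtain ⟨r, hr⟩ := exists_linear_dual b Mdual N
    (fun v hv c hc => (hMdual v).mp hv c (hNM hc))
  obtain ⟨rp, hrp⟩ := exists_linear_dual b Mdual Nperp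
    (fun v hv c hc => (hMdual v).mp hv c (hNperpM hc))
  -- surjectivity of r
  have hrsurj : Function.Surjective r := by
    intro g
    set P : Submodule ℤ M := N.comap M.subtype with hP
    haveI : Module.Finite ℤ (M ⧸ P) :=
      Module.Finite.of_surjective _ (Submodule.mkQ_surjective _)
    haveI : NoZeroSMulDivisors ℤ (M ⧸ P) := by
      constructor
      intro k x h
      by_cases hk : k = 0
      · exact Or.inl hk
      · refine Or.inr ?_
        obtain ⟨m, rfl⟩ := Submodule.mkQ_surjective _ x
        rw [← map_smul, Submodule.mkQ_apply, Submodule.Quotient.mk_eq_zero] at h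
        have hm : (m : V) ∈ N := hprim (m : V) m.2 k hk (Submodule.mem_comap.mp h)
        rw [Submodule.mkQ_apply, Submodule.Quotient.mk_eq_zero]
        exact Submodule.mem_comap.mpr hm
    haveI : Module.Free ℤ (M ⧸ P) := Module.free_of_finite_type_torsion_free'
    obtain ⟨σ, hσ⟩ := Module.projective_lifting_property P.mkQ LinearMap.id
      (Submodule.mkQ_surjective P)
    set π : ↥M →ₗ[ℤ] ↥M := LinearMap.id - σ.comp P.mkQ with hπdef
    have hπmem : ∀ m : M, π m ∈ P := by
      intro m
      have h0 : P.mkQ (π m) = 0 := by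
        rw [hπdef]
        simp only [LinearMap.sub_apply, LinearMap.id_apply, LinearMap.comp_apply, map_sub]
        have h1 : P.mkQ (σ (P.mkQ m)) = P.mkQ m := LinearMap.congr_fun hσ (P.mkQ m)
        rw [h1, sub_self]
      rwa [Submodule.mkQ_apply, Submodule.Quotient.mk_eq_zero] at h0
    set G : M →ₗ[ℤ] ℤ := (g.comp (Submodule.comapSubtypeEquivOfLe hNM).toLinearMap).comp
      (LinearMap.codRestrict P π hπmem) with hG
    have hGN : ∀ (m : ↥M) (hm : (m : V) ∈ N), G m = g ⟨(m : V), hm⟩ := by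
      intro m hm
      have hmP : m ∈ P := Submodule.mem_comap.mpr hm
      have hπ : π m = m := by
        have h0 : P.mkQ m = 0 := by
          rw [Submodule.mkQ_apply, Submodule.Quotient.mk_eq_zero]; exact hmP
        rw [hπdef]
        simp [h0]
      rw [hG]
      simp only [LinearMap.comp_apply]
      congr 1
      apply Subtype.ext
      show ((((Submodule.comapSubtypeEquivOfLe hNM)
        (LinearMap.codRestrict P π hπmem m) : ↥N)) : V) = ((m : V))
      rw [Submodule.comapSubtypeEquivOfLe]
      simp only [LinearEquiv.coe_mk, LinearMap.codRestrict_apply]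
      exact congrArg Subtype.val hπ
    set bM := Module.Free.chooseBasis ℤ M with hbM
    have hliZ : LinearIndependent ℤ (fun i => ((bM i : V))) :=
      bM.linearIndependent.map' M.subtype (Submodule.ker_subtype M)
    have hliQ : LinearIndependent ℚ (fun i => ((bM i : V))) :=
      (LinearIndependent.iff_fractionRing ℤ ℚ).mp hliZ
    have h2' : (span ℤ (Set.range fun i => ((bM i : V)))) = M := by
      rw [show (Set.range fun i => ((bM i : V))) = M.subtype '' Set.range bM from by
        rw [← Set.range_comp]; rfl, ← Submodule.map_span, bM.span_eq, Submodule.map_subtype_top]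
    have hspV : span ℚ (Set.range fun i => ((bM i : V))) = ⊤ := by
      conv_lhs => rw [← Submodule.span_span_of_tower (R := ℤ) (S := ℚ)]
      rw [h2', hMspan]
    set BV : Module.Basis _ ℚ V := Module.Basis.mk hliQ hspV.ge with hBV
    set fQ : V →ₗ[ℚ] ℚ := BV.constr ℚ (fun i => ((G (bM i) : ℤ) : ℚ)) with hfQ
    have hbnd : b.Nondegenerate :=
      ⟨hnd, fun y hy => hnd y (fun w => by rw [hsymm]; exact hy w)⟩
    set v0 : V := (LinearMap.BilinForm.toDual b hbnd).symm fQ with hv0def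
    have hv0 : ∀ x : V, b v0 x = fQ x := fun x =>
      LinearMap.BilinForm.apply_toDual_symm_apply fQ x
    have hagree : ∀ m : ↥M, b v0 (m : V) = ((G m : ℤ) : ℚ) := by
      have heq : (((b v0).restrictScalars ℤ).comp M.subtype) =
          ((Algebra.linearMap ℤ ℚ).comp G) := by
        apply bM.ext; intro i
        simp only [LinearMap.coe_comp, Function.comp_apply, LinearMap.coe_restrictScalars,
          Submodule.coe_subtype, Algebra.linearMap_apply]
        rw [hv0 ((bM i : V))]
        have h4 : ((bM i : V)) = BV i := by rw [hBV, Module.Basis.mk_apply]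
        rw [h4, hfQ, Module.Basis.constr_basis]
        simp
      intro m
      exact LinearMap.congr_fun heq m
    have hv0Mdual : v0 ∈ Mdual := (hMdual v0).mpr (fun m hm => ⟨G ⟨m, hm⟩, hagree ⟨m, hm⟩⟩)
    refine ⟨⟨v0, hv0Mdual⟩, ?_⟩
    ext x
    apply Int.cast_injective (α := ℚ)
    rw [hr]
    have hxM : (x : V) ∈ M := hNM x.2
    show b v0 (x : V) = _
    rw [hagree ⟨(x : V), hxM⟩, hGN ⟨(x : V), hxM⟩ x.2]
  set Φ : Mdual →ₗ[ℤ] ((N →ₗ[ℤ] ℤ) ⧸ LinearMap.range φ) :=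
    (LinearMap.range φ).mkQ.comp r with hΦ
  have hΦsurj : Function.Surjective Φ := by
    intro y
    obtain ⟨f, rfl⟩ := Submodule.mkQ_surjective _ y
    obtain ⟨v, hv⟩ := hrsurj f
    exact ⟨v, by rw [hΦ, LinearMap.comp_apply, hv]⟩
  set J : Submodule ℤ Mdual := LinearMap.ker Φ with hJ
  set Mc : Submodule ℤ Mdual := M.comap Mdual.subtype with hMc
  set T : Submodule ℤ Mdual := Mc ⊔ J with hT
  have e1 : Nat.card ((N →ₗ[ℤ] ℤ) ⧸ LinearMap.range φ) = Nat.card (Mdual ⧸ J) :=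
    (Nat.card_congr (LinearMap.quotKerEquivOfSurjective Φ hΦsurj).toEquiv).symm
  have hmul := card_quotient_mul J T le_sup_right
  set K : Submodule ℤ Mc := (Mc ⊓ J).comap Mc.subtype with hK
  have e2 : Nat.card (↥T ⧸ J.comap T.subtype) = Nat.card (↥Mc ⧸ K) :=
    (Nat.card_congr (LinearMap.quotientInfEquivSupQuotient Mc J).toEquiv).symm
  set Θ : ↥Mc →ₗ[ℤ] ((Nperp →ₗ[ℤ] ℤ) ⧸ LinearMap.range ψ) :=
    (LinearMap.range ψ).mkQ.comp (rp.comp Mc.subtype) with hΘ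
  have hJmem : ∀ v : Mdual, v ∈ J ↔ r v ∈ LinearMap.range φ := by
    intro v
    rw [hJ, LinearMap.mem_ker, hΦ, LinearMap.comp_apply, Submodule.mkQ_apply,
      Submodule.Quotient.mk_eq_zero]
  have hΘmem : ∀ m : ↥Mc, Θ m = 0 ↔ rp (m : Mdual) ∈ LinearMap.range ψ := by
    intro m
    rw [hΘ, LinearMap.comp_apply, LinearMap.comp_apply, Submodule.mkQ_apply,
      Submodule.Quotient.mk_eq_zero]
    rfl
  have hker1 : K ≤ LinearMap.ker Θ := by
    intro m hm
    have hm' := Submodule.mem_inf.mp (Submodule.mem_comap.mp hm)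
    obtain ⟨n, hn⟩ := (hJmem _).mp hm'.2
    have hmM : (((m : Mdual)) : V) ∈ M := Submodule.mem_comap.mp hm'.1
    have hy0 : ((((m : Mdual)) : V) - (n : V)) ∈ Nperp := by
      apply (hNperpdef _).mpr
      refine ⟨sub_mem hmM (hNM n.2), ?_⟩
      intro x hx
      have h6 := LinearMap.congr_fun hn ⟨x, hx⟩
      have e7 : ((φ n ⟨x, hx⟩ : ℤ) : ℚ) = ((r (m : Mdual) ⟨x, hx⟩ : ℤ) : ℚ) := by
        exact_mod_cast h6
      rw [hφ, hr] at e7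
      rw [map_sub, LinearMap.sub_apply]
      rw [show b (n : V) x = b x (n : V) from hsymm _ _, e7, sub_self]
    rw [LinearMap.mem_ker]
    refine (hΘmem m).mpr ⟨⟨_, hy0⟩, ?_⟩
    ext y
    apply Int.cast_injective (α := ℚ)
    rw [hψ, hrp]
    show b (y : V) ((((m : Mdual)) : V) - (n : V)) = _
    rw [map_sub]
    have hyn : b (y : V) (n : V) = 0 := ((hNperpdef _).mp y.2).2 _ n.2
    rw [hyn, sub_zero, hsymm]
  have hker2 : LinearMap.ker Θ ≤ K := by
    intro m hm
    have h8 : rp (m : Mdual) ∈ LinearMap.range ψ := (hΘmem m).mp (LinearMap.mem_ker.mp hm)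
    obtain ⟨y0, hy0⟩ := h8
    set z : V := ((((m : Mdual))) : V) - (y0 : V) with hz
    have hmM : (((m : Mdual)) : V) ∈ M := Submodule.mem_comap.mp m.2
    have hzperp : ∀ y ∈ Nperp, b y z = 0 := by
      intro y hy
      have h6 := LinearMap.congr_fun hy0 ⟨y, hy⟩
      have e7 : ((ψ y0 ⟨y, hy⟩ : ℤ) : ℚ) = ((rp (m : Mdual) ⟨y, hy⟩ : ℤ) : ℚ) := by
        exact_mod_cast h6
      rw [hψ, hrp] at e7
      rw [hz, map_sub, e7, hsymm, sub_self]
    have hzWp : ∀ w ∈ Wp, b w z = 0 := by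
      intro w hw
      rw [← hspanNperp] at hw
      rw [hsymm]
      refine hker_span z Nperp ?_ w hw
      intro x hx
      rw [hsymm]
      exact hzperp x hx
    have hzsup : z ∈ W ⊔ Wp := by rw [hcompl.sup_eq_top]; trivial
    obtain ⟨z1, hz1, z2, hz2, hzdec⟩ := mem_sup.mp hzsup
    have hz20 : z2 = 0 := by
      apply hndWp z2 hz2
      intro w hw
      have h9 : b w z = 0 := hzWp w hw
      rw [← hzdec, map_add] at h9
      have h11 : b w z1 = 0 := by rw [hsymm]; exact hw z1 hz1
      rw [h11, zero_add] at h9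
      rw [hsymm]
      exact h9
    have hzW : z ∈ W := by
      have : z = z1 := by rw [← hzdec, hz20, add_zero]
      rw [this]; exact hz1
    have hzM : z ∈ M := sub_mem hmM (hNperpM y0.2)
    have hzN : z ∈ N := hMW_N z hzM hzW
    have hrm : r (m : Mdual) ∈ LinearMap.range φ := by
      refine ⟨⟨z, hzN⟩, ?_⟩
      ext x
      apply Int.cast_injective (α := ℚ)
      rw [hφ, hr]
      have hmz : ((((m : Mdual))) : V) = z + (y0 : V) := by rw [hz]; abel
      show b (x : V) z = b ((((m : Mdual))) : V) (x : V)
      rw [hmz, map_add, LinearMap.add_apply]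
      have h12 : b (y0 : V) (x : V) = 0 := ((hNperpdef _).mp y0.2).2 _ x.2
      rw [h12, add_zero, hsymm]
    exact Submodule.mem_comap.mpr (Submodule.mem_inf.mpr ⟨m.2, (hJmem _).mpr hrm⟩)
  have hθinj : Function.Injective (K.liftQ Θ hker1) := by
    rw [← LinearMap.ker_eq_bot]
    exact Submodule.ker_liftQ_eq_bot _ _ _ hker2
  haveI := fin2
  have hle2 : Nat.card (↥Mc ⧸ K) ≤ Nat.card ((Nperp →ₗ[ℤ] ℤ) ⧸ LinearMap.range ψ) :=
    Nat.card_le_card_of_injective (K.liftQ Θ hker1) hθinj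
  haveI := find
  have hmapQsurj : Function.Surjective (Submodule.mapQ Mc T LinearMap.id
      (by rw [Submodule.comap_id]; exact le_sup_left)) := by
    intro x
    obtain ⟨a, ha⟩ := Submodule.mkQ_surjective T x
    refine ⟨Mc.mkQ a, ?_⟩
    rw [Submodule.mkQ_apply, Submodule.mapQ_apply, LinearMap.id_apply, ← Submodule.mkQ_apply]
    exact ha
  have hle1 : Nat.card (Mdual ⧸ T) ≤ Nat.card (Mdual ⧸ Mc) :=
    Nat.card_le_card_of_surjective _ hmapQsurj
  refine ⟨fin1, fin2, ?_⟩
  calc Nat.card ((N →ₗ[ℤ] ℤ) ⧸ LinearMap.range φ)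
      = Nat.card (Mdual ⧸ J) := e1
    _ = Nat.card (Mdual ⧸ T) * Nat.card (↥T ⧸ J.comap T.subtype) := hmul
    _ = Nat.card (Mdual ⧸ T) * Nat.card (↥Mc ⧸ K) := by rw [e2]
    _ ≤ Nat.card (Mdual ⧸ Mc) * Nat.card ((Nperp →ₗ[ℤ] ℤ) ⧸ LinearMap.range ψ) :=
      Nat.mul_le_mul hle1 hle2
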